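/- Let M be an n×n matrix over RatFunc ℂ all of whose entries have intDegree ≤ 0, and let B₁ ⊇ B₂ ⊇ ... ⊇ B_m be a decreasing chain of subsets of Fin n with B_m nonempty. Then the sequential isospectral reduction R(M; B₁, ..., B_m) := R(... R(R(M;B₁); B₂) ...; B_m), where at each step the reduction is taken over the copy of the next index set B_{k+1} inside the index subtype of the current reduced matrix, equals the single reduction R(M; B_m), after identifying the iterated subtypes with the subtype of B_m via the canonical equivalences. -/

import Mathlib

set_option synthInstance.maxHeartbeats 1000000
set_option maxHeartbeats 1000000

open Matrix

/-- The isospectral reduction of `M` over `B`, with interior index set `I = Bᶜ`: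
`R(M;B) = M_BB - M_BI (M_II - X•1)⁻¹ M_IB`. -/
noncomputable def isoRed {α : Type} [Fintype α] [DecidableEq α]
    (M : Matrix α α (RatFunc ℂ)) (B : Finset α) : Matrix ↥B ↥B (RatFunc ℂ) :=
  M.submatrix (Subtype.val : ↥B → α) (Subtype.val : ↥B → α) -
    M.submatrix (Subtype.val : ↥B → α) (Subtype.val : ↥Bᶜ → α) *
      (M.submatrix (Subtype.val : ↥Bᶜ → α) (Subtype.val : ↥Bᶜ → α) -
        (RatFunc.X : RatFunc ℂ) • 1)⁻¹ *
      M.submatrix (Subtype.val : ↥Bᶜ → α) (Subtype.val : ↥B → α)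

/-- The canonical equivalence between the copy of `C` inside the subtype of `B`
(for `C ⊆ B`) and the subtype of `C`. -/
def copyEquiv {α : Type} [Fintype α] [DecidableEq α] {B C : Finset α} (h : C ⊆ B) :
    ↥(Finset.univ.filter (fun x : ↥B => x.val ∈ C)) ≃ ↥C where
  toFun x := ⟨x.1.1, (Finset.mem_filter.mp x.2).2⟩
  invFun y := ⟨⟨y.1, h y.2⟩, Finset.mem_filter.mpr ⟨Finset.mem_univ _, y.2⟩⟩
  left_inv _ := Subtype.ext (Subtype.ext rfl)
  right_inv _ := rfl

/-- One step of a sequential reduction: reduce a matrix indexed by the subtype of `B`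
over the copy of `C ⊆ B` inside that subtype, and identify the resulting index type
with the subtype of `C` via the canonical equivalence. -/
noncomputable def redStep {α : Type} [Fintype α] [DecidableEq α] {B : Finset α}
    (A : Matrix ↥B ↥B (RatFunc ℂ)) (C : Finset α) (h : C ⊆ B) :
    Matrix ↥C ↥C (RatFunc ℂ) :=
  Matrix.reindex (copyEquiv h) (copyEquiv h)
    (isoRed A (Finset.univ.filter (fun x : ↥B => x.val ∈ C)))

/-- The sequential isospectral reduction `R(M; B₀, …, B_m)` of `M` over a decreasing
chain `B₀ ⊇ B₁ ⊇ ⋯ ⊇ B_m` of index sets. -/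
noncomputable def seqRed {n : ℕ} (M : Matrix (Fin n) (Fin n) (RatFunc ℂ)) :
    (m : ℕ) → (B : Fin (m + 1) → Finset (Fin n)) →
    (∀ k : Fin m, B k.succ ⊆ B k.castSucc) →
    Matrix ↥(B (Fin.last m)) ↥(B (Fin.last m)) (RatFunc ℂ)
  | 0, B, _ => isoRed M (B (Fin.last 0))
  | m + 1, B, h =>
      redStep
        (seqRed M m (fun k => B k.castSucc)
          (fun k => by
            have hk := h k.castSucc
            rwa [Fin.succ_castSucc] at hk))
        (B (Fin.last (m + 1)))
        (by
          have hl := h (Fin.last m)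
          rwa [Fin.succ_last] at hl)

namespace SRAux

open RatFunc


def DegLE (w : RatFunc ℂ) (d : ℤ) : Prop := w = 0 ∨ w.intDegree ≤ d

lemma degLE_zero (d : ℤ) : DegLE 0 d := Or.inl rfl

lemma degLE_of_ne {w : RatFunc ℂ} {d : ℤ} (h : w.intDegree ≤ d) : DegLE w d := Or.inr h

lemma DegLE.mono {w : RatFunc ℂ} {d e : ℤ} (h : DegLE w d) (hde : d ≤ e) : DegLE w e :=
  h.imp id (fun h' => le_trans h' hde)

lemma DegLE.neg {w : RatFunc ℂ} {d : ℤ} (h : DegLE w d) : DegLE (-w) d := by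
  rcases h with h | h
  · left; simp [h]
  · right; rwa [intDegree_neg]

lemma DegLE.add {x y : RatFunc ℂ} {d : ℤ} (hx : DegLE x d) (hy : DegLE y d) :
    DegLE (x + y) d := by
  rcases hx with rfl | hx
  · simpa using hy
  rcases eq_or_ne y 0 with rfl | hy0
  · simpa using degLE_of_ne hx
  rcases eq_or_ne (x + y) 0 with h0 | h0
  · exact Or.inl h0
  have hyd : y.intDegree ≤ d := by
    rcases hy with rfl | hy
    · exact absurd rfl hy0
    · exact hy
  exact Or.inr <| (intDegree_add_le hy0 h0).trans (max_le hx hyd)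

lemma DegLE.sub {x y : RatFunc ℂ} {d : ℤ} (hx : DegLE x d) (hy : DegLE y d) :
    DegLE (x - y) d := by
  rw [sub_eq_add_neg]; exact hx.add hy.neg

lemma DegLE.mul {x y : RatFunc ℂ} {d e : ℤ} (hx : DegLE x d) (hy : DegLE y e) :
    DegLE (x * y) (d + e) := by
  rcases hx with rfl | hx
  · left; simp
  rcases hy with rfl | hy
  · left; simp
  rcases eq_or_ne x 0 with rfl | hx0
  · left; simp
  rcases eq_or_ne y 0 with rfl | hy0
  · left; simp
  exact Or.inr <| by rw [intDegree_mul hx0 hy0]; exact add_le_add hx hy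

lemma degLE_sum {ι : Type*} (s : Finset ι) (f : ι → RatFunc ℂ) (d : ℤ)
    (h : ∀ i ∈ s, DegLE (f i) d) : DegLE (∑ i ∈ s, f i) d := by
  classical
  induction s using Finset.induction_on with
  | empty => simpa using degLE_zero d
  | insert _ _ hni ih =>
    rw [Finset.sum_insert hni]
    exact (h _ (Finset.mem_insert_self _ _)).add
      (ih fun i hi => h i (Finset.mem_insert_of_mem hi))

lemma degLE_prod {ι : Type*} (s : Finset ι) (f : ι → RatFunc ℂ) (b : ι → ℤ)
    (h : ∀ i ∈ s, DegLE (f i) (b i)) : DegLE (∏ i ∈ s, f i) (∑ i ∈ s, b i) := by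
  classical
  induction s using Finset.induction_on with
  | empty => simpa using degLE_of_ne (by simp [intDegree_one])
  | insert _ _ hni ih =>
    rw [Finset.prod_insert hni, Finset.sum_insert hni]
    exact (h _ (Finset.mem_insert_self _ _)).mul
      (ih fun i hi => h i (Finset.mem_insert_of_mem hi))

lemma intDegree_prod_ne {ι : Type*} (s : Finset ι) (f : ι → RatFunc ℂ)
    (h : ∀ i ∈ s, f i ≠ 0) :
    (∏ i ∈ s, f i) ≠ 0 ∧ (∏ i ∈ s, f i).intDegree = ∑ i ∈ s, (f i).intDegree := by
  classical
  induction s using Finset.induction_on with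
  | empty => simp [intDegree_one]
  | insert _ _ hni ih =>
    rename_i a s
    rw [Finset.prod_insert hni, Finset.sum_insert hni]
    have ha := h _ (Finset.mem_insert_self a s)
    obtain ⟨hp, hd⟩ := ih fun i hi => h i (Finset.mem_insert_of_mem hi)
    exact ⟨mul_ne_zero ha hp, by rw [intDegree_mul ha hp, hd]⟩

/-- If `x ≠ 0` and `y` has strictly smaller degree then `x + y ≠ 0` and degrees agree. -/
lemma add_small {x y : RatFunc ℂ} (hx : x ≠ 0) (hy : DegLE y (x.intDegree - 1)) :
    x + y ≠ 0 ∧ (x + y).intDegree = x.intDegree := by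
  rcases eq_or_ne y 0 with rfl | hy0
  · simp [hx]
  have hylt : y.intDegree < x.intDegree := by
    rcases hy with rfl | hy
    · exact absurd rfl hy0
    · omega
  have hne : x + y ≠ 0 := by
    intro h
    have hyx : y = -x := eq_neg_of_add_eq_zero_right h
    rw [hyx, intDegree_neg] at hylt
    exact lt_irrefl _ hylt
  refine ⟨hne, le_antisymm ((intDegree_add_le hy0 hne).trans (max_le le_rfl hylt.le)) ?_⟩
  have hx' : (x + y) + (-y) = x := by ring
  have h2 : x.intDegree ≤ max (x + y).intDegree (-y).intDegree := by
    calc x.intDegree = ((x + y) + (-y)).intDegree := by rw [hx']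
      _ ≤ _ := intDegree_add_le (neg_ne_zero.mpr hy0) (by rw [hx']; exact hx)
  rw [intDegree_neg] at h2
  rcases le_max_iff.mp h2 with h3 | h3
  · exact h3
  · omega


lemma DegLE.units_smul (u : ℤˣ) {x : RatFunc ℂ} {d : ℤ} (h : DegLE x d) : DegLE (u • x) d := by
  rcases Int.units_eq_one_or u with rfl | rfl
  · simpa using h
  · simpa using h.neg

lemma det_shift {ι : Type} [Fintype ι] [DecidableEq ι] (A : Matrix ι ι (RatFunc ℂ))
    (hA : ∀ i j, DegLE (A i j) 0) :
    (A - (RatFunc.X : RatFunc ℂ) • 1).det ≠ 0 ∧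
      (A - (RatFunc.X : RatFunc ℂ) • 1).det.intDegree = (Fintype.card ι : ℤ) := by
  classical
  set N := A - (RatFunc.X : RatFunc ℂ) • 1 with hN
  have hNij : ∀ i j, i ≠ j → N i j = A i j := by
    intro i j hij
    simp [hN, Matrix.sub_apply, Matrix.smul_apply, Matrix.one_apply, hij]
  have hdiag : ∀ i, N i i ≠ 0 ∧ (N i i).intDegree = 1 := by
    intro i
    have hXne : (-(RatFunc.X) : RatFunc ℂ) ≠ 0 := by
      simpa using RatFunc.X_ne_zero
    have hXd : (-(RatFunc.X) : RatFunc ℂ).intDegree = 1 := by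
      rw [intDegree_neg, intDegree_X]
    have h := add_small (x := -(RatFunc.X)) (y := A i i) hXne
      (by rw [hXd]; exact (hA i i).mono (by norm_num))
    have hNe : N i i = -(RatFunc.X) + A i i := by
      simp [hN, Matrix.sub_apply, Matrix.smul_apply, Matrix.one_apply]
      ring
    rw [hNe]
    exact ⟨h.1, by rw [h.2, hXd]⟩
  have hN1 : ∀ i j, DegLE (N i j) 1 := by
    intro i j
    rcases eq_or_ne i j with rfl | hij
    · exact degLE_of_ne (le_of_eq (hdiag i).2)
    · rw [hNij i j hij]; exact (hA i j).mono (by norm_num)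
  obtain ⟨hTne, hTd⟩ := intDegree_prod_ne Finset.univ (fun i => N i i) (fun i _ => (hdiag i).1)
  have hTd' : (∏ i, N i i).intDegree = (Fintype.card ι : ℤ) := by
    rw [hTd]
    simp only [(hdiag _).2]
    simp [Finset.card_univ]
  rw [Matrix.det_apply, ← Finset.sum_erase_add _ _ (Finset.mem_univ (1 : Equiv.Perm ι))]
  have hone : (Equiv.Perm.sign (1 : Equiv.Perm ι)) • ∏ i, N ((1 : Equiv.Perm ι) i) i
      = ∏ i, N i i := by simp
  rw [hone]
  have hR : DegLE (∑ σ ∈ Finset.univ.erase 1, Equiv.Perm.sign σ • ∏ i, N (σ i) i)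
      ((Fintype.card ι : ℤ) - 2) := by
    apply degLE_sum
    intro σ hσ
    have hσ1 : σ ≠ 1 := (Finset.mem_erase.mp hσ).1
    obtain ⟨i₀, hi₀⟩ : ∃ i, σ i ≠ i := by
      by_contra hcon
      push_neg at hcon
      exact hσ1 (Equiv.ext hcon)
    apply DegLE.units_smul
    refine (degLE_prod Finset.univ (fun i => N (σ i) i)
      (fun i => if σ i = i then 1 else 0) ?_).mono ?_
    · intro i _
      show DegLE (N (σ i) i) (if σ i = i then 1 else 0)
      by_cases h : σ i = i
      · rw [if_pos h, h]
        exact hN1 i i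
      · rw [if_neg h, hNij _ _ h]
        exact hA (σ i) i
    · -- sum of indicators of fixed points ≤ card - 2
      have hne2 : i₀ ≠ σ i₀ := Ne.symm hi₀
      set s : Finset ι := {i₀, σ i₀} with hs
      have hcard : s.card = 2 := by
        rw [hs, Finset.card_insert_of_notMem (by simp [hne2]), Finset.card_singleton]
      have hsplit := Finset.sum_sdiff (f := fun i => if σ i = i then (1:ℤ) else 0)
        (s.subset_univ)
      have hpair : ∑ i ∈ s, (if σ i = i then (1:ℤ) else 0) = 0 := by
        rw [hs, Finset.sum_pair hne2]
        have h2 : σ (σ i₀) ≠ σ i₀ := fun hc => hi₀ (σ.injective hc)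
        simp [hi₀, h2]
      have hbound : ∑ i ∈ Finset.univ \ s, (if σ i = i then (1:ℤ) else 0)
          ≤ (Finset.univ \ s).card := by
        calc ∑ i ∈ Finset.univ \ s, (if σ i = i then (1:ℤ) else 0)
            ≤ ∑ _i ∈ Finset.univ \ s, (1:ℤ) := by
              apply Finset.sum_le_sum
              intro i _
              split <;> norm_num
          _ = (Finset.univ \ s).card := by simp
      have hcards : (Finset.univ \ s).card = Fintype.card ι - 2 := by
        rw [Finset.card_sdiff_of_subset (s.subset_univ), hcard, Finset.card_univ]
      have hcard2 : 2 ≤ Fintype.card ι := by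
        have := Finset.card_le_card (s.subset_univ)
        rw [hcard, Finset.card_univ] at this
        exact this
      calc ∑ i ∈ Finset.univ, (if σ i = i then (1:ℤ) else 0)
          = ∑ i ∈ Finset.univ \ s, (if σ i = i then (1:ℤ) else 0)
            + ∑ i ∈ s, (if σ i = i then (1:ℤ) else 0) := hsplit.symm
        _ ≤ (Finset.univ \ s).card + 0 := by
            rw [hpair]
            exact add_le_add hbound le_rfl
        _ ≤ (Fintype.card ι : ℤ) - 2 := by
            rw [hcards]
            push_cast [hcard2]
            omega
  have hfin := add_small (x := ∏ i, N i i)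
    (y := ∑ σ ∈ Finset.univ.erase 1, Equiv.Perm.sign σ • ∏ i, N (σ i) i)
    hTne (by rw [hTd']; exact hR.mono (by omega))
  rw [add_comm] at hfin
  exact ⟨hfin.1, by rw [hfin.2, hTd']⟩


lemma degLE_shift {ι : Type} [Fintype ι] [DecidableEq ι] (A : Matrix ι ι (RatFunc ℂ))
    (hA : ∀ i j, DegLE (A i j) 0) (i j : ι) :
    DegLE ((A - (RatFunc.X : RatFunc ℂ) • 1) i j) 1 := by
  rw [Matrix.sub_apply, Matrix.smul_apply]
  refine DegLE.sub ((hA i j).mono zero_le_one) ?_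
  by_cases h : i = j
  · subst h
    rw [Matrix.one_apply_eq, smul_eq_mul, mul_one]
    exact degLE_of_ne (le_of_eq intDegree_X)
  · rw [Matrix.one_apply_ne h, smul_zero]
    exact degLE_zero _

lemma inv_shift {ι : Type} [Fintype ι] [DecidableEq ι] (A : Matrix ι ι (RatFunc ℂ))
    (hA : ∀ i j, DegLE (A i j) 0) :
    IsUnit (A - (RatFunc.X : RatFunc ℂ) • 1).det ∧
      ∀ i j, DegLE ((A - (RatFunc.X : RatFunc ℂ) • 1)⁻¹ i j) (-1) := by
  classical
  obtain ⟨hdet, hdeg⟩ := det_shift A hA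
  set N := A - (RatFunc.X : RatFunc ℂ) • 1 with hNdef
  refine ⟨isUnit_iff_ne_zero.mpr hdet, ?_⟩
  intro i j
  rw [Matrix.inv_def, Matrix.smul_apply, smul_eq_mul]
  have hinv : (Ring.inverse N.det).intDegree = -(Fintype.card ι : ℤ) := by
    rw [Ring.inverse_eq_inv']
    have h1 := intDegree_mul hdet (inv_ne_zero hdet)
    rw [mul_inv_cancel₀ hdet, intDegree_one] at h1
    omega
  have hcard1 : 1 ≤ Fintype.card ι := Fintype.card_pos_iff.mpr ⟨i⟩
  have hadj : DegLE (N.adjugate i j) ((Fintype.card ι : ℤ) - 1) := by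
    rw [Matrix.adjugate_apply, Matrix.det_apply]
    apply degLE_sum
    intro σ _
    apply DegLE.units_smul
    refine (degLE_prod Finset.univ _ (fun k => if σ k = j then 0 else 1) ?_).mono ?_
    · intro k _
      show DegLE ((N.updateRow j (Pi.single i 1)) (σ k) k) (if σ k = j then 0 else 1)
      by_cases h : σ k = j
      · rw [if_pos h, h, Matrix.updateRow_self]
        by_cases hk : k = i
        · subst hk
          rw [Pi.single_eq_same]
          exact degLE_of_ne (le_of_eq intDegree_one)
        · rw [Pi.single_eq_of_ne hk]
          exact degLE_zero _
      · rw [if_neg h, Matrix.updateRow_ne h]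
        exact degLE_shift A hA _ _
    · have hsum : ∑ k, (if σ k = j then (0:ℤ) else 1)
          = ∑ k, (if k = j then (0:ℤ) else 1) :=
        Fintype.sum_equiv σ _ _ (fun k => rfl)
      rw [hsum, ← Finset.sum_erase_add _ _ (Finset.mem_univ j), if_pos rfl, add_zero]
      have : ∀ k ∈ Finset.univ.erase j, (if k = j then (0:ℤ) else 1) = 1 := by
        intro k hk
        rw [if_neg (Finset.mem_erase.mp hk).1]
      rw [Finset.sum_congr rfl this, Finset.sum_const, Finset.card_erase_of_mem (Finset.mem_univ j),
        Finset.card_univ, nsmul_eq_mul, mul_one]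
      push_cast [hcard1]
      omega
  exact ((degLE_of_ne (le_of_eq hinv)).mul hadj).mono (by omega)


lemma degLE_isoRed {α : Type} [Fintype α] [DecidableEq α] (M : Matrix α α (RatFunc ℂ))
    (hM : ∀ i j, DegLE (M i j) 0) (B : Finset α) (x y : ↥B) :
    DegLE (isoRed M B x y) 0 := by
  classical
  obtain ⟨-, hW⟩ := inv_shift (M.submatrix (Subtype.val : ↥Bᶜ → α) Subtype.val)
    (fun i j => hM _ _)
  rw [isoRed, Matrix.sub_apply, Matrix.mul_apply]
  refine DegLE.sub (hM _ _) ((degLE_sum _ _ (-1) ?_).mono (by norm_num))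
  intro q _
  rw [Matrix.mul_apply]
  refine ((degLE_sum Finset.univ _ (-1) ?_).mul (hM _ _)).mono (by norm_num)
  intro p _
  exact ((hM _ _).mul (hW p q)).mono (by norm_num)

lemma schur_quotient {R : Type} [Field R] {c j i : Type} [Fintype c] [Fintype j] [Fintype i]
    [DecidableEq c] [DecidableEq j] [DecidableEq i]
    (A : Matrix c c R) (B₁ : Matrix c j R) (B₂ : Matrix c i R)
    (C₁ : Matrix j c R) (C₂ : Matrix i c R)
    (E : Matrix j j R) (F : Matrix j i R) (G : Matrix i j R) (H : Matrix i i R)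
    (hH : IsUnit H.det) (hS : IsUnit (E - F * H⁻¹ * G).det) :
    A - fromCols B₁ B₂ * (fromBlocks E F G H)⁻¹ * fromRows C₁ C₂
      = (A - B₂ * H⁻¹ * C₂)
        - (B₁ - B₂ * H⁻¹ * G) * (E - F * H⁻¹ * G)⁻¹ * (C₁ - F * H⁻¹ * C₂) := by
  haveI iH : Invertible H := H.invertibleOfIsUnitDet hH
  have hHinv : ⅟H = H⁻¹ := invOf_eq_nonsing_inv H
  haveI iS : Invertible (E - F * ⅟H * G) := by
    rw [hHinv]
    exact (E - F * H⁻¹ * G).invertibleOfIsUnitDet hS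
  haveI iD : Invertible (fromBlocks E F G H) := fromBlocks₂₂Invertible E F G H
  have hSinv : ⅟(E - F * ⅟H * G) = (E - F * H⁻¹ * G)⁻¹ := by
    rw [invOf_eq_nonsing_inv, hHinv]
  have hD : (fromBlocks E F G H)⁻¹
      = fromBlocks ((E - F * H⁻¹ * G)⁻¹) (-((E - F * H⁻¹ * G)⁻¹ * F * H⁻¹))
          (-(H⁻¹ * G * (E - F * H⁻¹ * G)⁻¹))
          (H⁻¹ + H⁻¹ * G * (E - F * H⁻¹ * G)⁻¹ * F * H⁻¹) := by
    rw [← invOf_eq_nonsing_inv, invOf_fromBlocks₂₂_eq, hSinv, hHinv]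
  rw [hD, fromCols_mul_fromBlocks, fromCols_mul_fromRows]
  generalize (E - F * H⁻¹ * G)⁻¹ = S
  generalize H⁻¹ = W
  simp only [Matrix.sub_mul, Matrix.mul_sub, Matrix.add_mul, Matrix.mul_add, Matrix.neg_mul,
    Matrix.mul_neg, Matrix.mul_assoc, neg_neg, sub_eq_add_neg, neg_add_rev]
  abel


section Main

variable {α : Type} [Fintype α] [DecidableEq α]

lemma redStep_isoRed (M : Matrix α α (RatFunc ℂ))
    (hM : ∀ i j, DegLE (M i j) 0) (B C : Finset α) (h : C ⊆ B) :
    redStep (isoRed M B) C h = isoRed M C := by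
  classical
  -- index maps
  set vC := (Subtype.val : ↥C → α)
  set vJ := (Subtype.val : ↥(B \ C) → α)
  set vI := (Subtype.val : ↥Bᶜ → α)
  set vCc := (Subtype.val : ↥Cᶜ → α)
  have hJB : ∀ p : ↥(B \ C), p.1 ∈ B := fun p => (Finset.mem_sdiff.mp p.2).1
  have hJnC : ∀ p : ↥(B \ C), p.1 ∉ C := fun p => (Finset.mem_sdiff.mp p.2).2
  have hInB : ∀ q : ↥Bᶜ, q.1 ∉ B := fun q => Finset.mem_compl.mp q.2
  set f₁ : ↥C → ↥B := fun x => ⟨x.1, h x.2⟩ with hf₁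
  set f₂ : ↥(B \ C) → ↥B := fun p => ⟨p.1, hJB p⟩ with hf₂
  set CB := Finset.univ.filter (fun x : ↥B => x.val ∈ C) with hCB
  have hmemCB : ∀ z : ↥B, z ∈ CB ↔ z.1 ∈ C := by
    intro z; simp [hCB]
  -- the equivalence between the complement of the copy of C inside ↥B and ↥(B \ C)
  have heJmem : ∀ z : ↥CBᶜ, z.1.1 ∈ B \ C := by
    intro z
    have hz := z.2
    rw [Finset.mem_compl, hmemCB] at hz
    exact Finset.mem_sdiff.mpr ⟨z.1.2, hz⟩
  set eJ : ↥(CBᶜ) ≃ ↥(B \ C) :=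
    { toFun := fun z => ⟨z.1.1, heJmem z⟩
      invFun := fun p => ⟨⟨p.1, hJB p⟩, by
        rw [Finset.mem_compl, hmemCB]; exact hJnC p⟩
      left_inv := fun z => Subtype.ext (Subtype.ext rfl)
      right_inv := fun p => rfl } with heJ
  -- the equivalence ↥(B \ C) ⊕ ↥Bᶜ ≃ ↥Cᶜ
  set eI : ↥(B \ C) ⊕ ↥Bᶜ ≃ ↥Cᶜ :=
    { toFun := Sum.elim (fun p => ⟨p.1, Finset.mem_compl.mpr (hJnC p)⟩)
        (fun q => ⟨q.1, Finset.mem_compl.mpr (fun hc => hInB q (h hc))⟩)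
      invFun := fun x => if hx : x.1 ∈ B
        then Sum.inl ⟨x.1, Finset.mem_sdiff.mpr ⟨hx, Finset.mem_compl.mp x.2⟩⟩
        else Sum.inr ⟨x.1, Finset.mem_compl.mpr hx⟩
      left_inv := by
        rintro (p | q)
        · simp [hJB p]
        · simp [hInB q]
      right_inv := by
        intro x
        by_cases hx : x.1 ∈ B
        · simp [hx]
        · simp [hx] } with heI
  -- blocks
  set A := M.submatrix vC vC with hA
  set B₁ := M.submatrix vC vJ with hB₁
  set B₂ := M.submatrix vC vI with hB₂
  set C₁ := M.submatrix vJ vC with hC₁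
  set C₂ := M.submatrix vI vC with hC₂
  set E := M.submatrix vJ vJ - (RatFunc.X : RatFunc ℂ) • 1 with hE
  set F := M.submatrix vJ vI with hF
  set G := M.submatrix vI vJ with hG
  set H := M.submatrix vI vI - (RatFunc.X : RatFunc ℂ) • 1 with hH'
  have hH : IsUnit H.det := (inv_shift (M.submatrix vI vI) (fun i j => hM _ _)).1
  -- block identities for the once-reduced matrix
  have hd : (isoRed M B).submatrix f₁ f₁ = A - B₂ * H⁻¹ * C₂ := rfl
  have he : (isoRed M B).submatrix f₁ f₂ = B₁ - B₂ * H⁻¹ * G := rfl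
  have hf : (isoRed M B).submatrix f₂ f₁ = C₁ - F * H⁻¹ * C₂ := rfl
  have hg : (isoRed M B).submatrix f₂ f₂ - (RatFunc.X : RatFunc ℂ) • 1
      = E - F * H⁻¹ * G := by
    have h1 : (isoRed M B).submatrix f₂ f₂
        = M.submatrix vJ vJ - F * H⁻¹ * G := rfl
    rw [h1, hE]
    abel
  have hS : IsUnit (E - F * H⁻¹ * G).det := by
    rw [← hg]
    exact (inv_shift ((isoRed M B).submatrix f₂ f₂)
      (fun p q => degLE_isoRed M hM B _ _)).1
  -- Step 1: rewrite the two-step reduction in terms of the blocks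
  have step1 : redStep (isoRed M B) C h
      = (isoRed M B).submatrix f₁ f₁
        - (isoRed M B).submatrix f₁ f₂
          * ((isoRed M B).submatrix f₂ f₂ - (RatFunc.X : RatFunc ℂ) • 1)⁻¹
          * (isoRed M B).submatrix f₂ f₁ := by
    have hW' : (isoRed M B).submatrix (Subtype.val : ↥CBᶜ → ↥B) Subtype.val
          - (RatFunc.X : RatFunc ℂ) • 1
        = ((isoRed M B).submatrix f₂ f₂ - (RatFunc.X : RatFunc ℂ) • 1).submatrix ⇑eJ ⇑eJ := by
      ext p q
      simp only [Matrix.submatrix_apply, Matrix.sub_apply, Matrix.smul_apply, Matrix.one_apply,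
        EmbeddingLike.apply_eq_iff_eq]
      rfl
    show Matrix.reindex (copyEquiv h) (copyEquiv h) (isoRed (isoRed M B) CB) = _
    rw [isoRed, hW', Matrix.inv_submatrix_equiv]
    ext x y
    simp only [Matrix.reindex_apply, Matrix.submatrix_apply, Matrix.sub_apply, Matrix.mul_apply]
    refine congrArg₂ (· - ·) rfl ?_
    refine Fintype.sum_equiv eJ _ _ ?_
    intro q
    refine congrArg₂ (· * ·) ?_ rfl
    refine Fintype.sum_equiv eJ _ _ ?_
    intro p
    rfl
  -- Step 2: the one-step reduction over C as a block matrix expression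
  have hcols : fromCols B₁ B₂ = (M.submatrix vC vCc).submatrix id ⇑eI := by
    ext x (p | p) <;> rfl
  have hrows : fromRows C₁ C₂ = (M.submatrix vCc vC).submatrix ⇑eI id := by
    ext (p | p) y <;> rfl
  have hblk : (M.submatrix vCc vCc - (RatFunc.X : RatFunc ℂ) • 1).submatrix ⇑eI ⇑eI
      = fromBlocks E F G H := by
    ext z w
    rcases z with p | p <;> rcases w with q | q <;>
      simp only [Matrix.submatrix_apply, Matrix.sub_apply, Matrix.smul_apply, Matrix.one_apply,
        Matrix.fromBlocks_apply₁₁, Matrix.fromBlocks_apply₁₂, Matrix.fromBlocks_apply₂₁,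
        Matrix.fromBlocks_apply₂₂, hE, hF, hG, hH']
    · rcases eq_or_ne p q with rfl | hpq
      · rw [if_pos rfl, if_pos rfl]
        rfl
      · rw [if_neg hpq, if_neg (fun hc => hpq (Sum.inl_injective (eI.injective hc)))]
        rfl
    · have hne : eI (Sum.inl p) ≠ eI (Sum.inr q) := by
        intro hc
        have hval := congrArg Subtype.val hc
        exact hInB q (hval ▸ hJB p)
      rw [if_neg hne, smul_zero, sub_zero]
      rfl
    · have hne : eI (Sum.inr p) ≠ eI (Sum.inl q) := by
        intro hc
        have hval := congrArg Subtype.val hc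
        exact hInB p (hval ▸ hJB q)
      rw [if_neg hne, smul_zero, sub_zero]
      rfl
    · rcases eq_or_ne p q with rfl | hpq
      · rw [if_pos rfl, if_pos rfl]
        rfl
      · rw [if_neg hpq, if_neg (fun hc => hpq (Sum.inr_injective (eI.injective hc)))]
        rfl
  have step2 : isoRed M C
      = A - fromCols B₁ B₂ * (fromBlocks E F G H)⁻¹ * fromRows C₁ C₂ := by
    rw [hcols, hrows, ← hblk, Matrix.inv_submatrix_equiv, Matrix.submatrix_mul_equiv,
      Matrix.submatrix_mul_equiv, Matrix.submatrix_id_id]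
    rfl
  rw [step1, hd, he, hf, hg, step2]
  exact (schur_quotient A B₁ B₂ C₁ C₂ E F G H hH hS).symm

end Main


end SRAux

theorem seqRed_eq_isoRed_last {n : ℕ} (M : Matrix (Fin n) (Fin n) (RatFunc ℂ))
    (hdeg : ∀ i j, (M i j).intDegree ≤ 0)
    (m : ℕ) (B : Fin (m + 1) → Finset (Fin n))
    (hchain : ∀ k : Fin m, B k.succ ⊆ B k.castSucc)
    (hlast : (B (Fin.last m)).Nonempty) :
    seqRed M m B hchain = isoRed M (B (Fin.last m)) := by
  have hM : ∀ i j, SRAux.DegLE (M i j) 0 := fun i j => Or.inr (hdeg i j)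
  induction m with
  | zero => rfl
  | succ m ih =>
    have hsub : B (Fin.last (m + 1)) ⊆ B ((Fin.last m).castSucc) := by
      have hl := hchain (Fin.last m)
      rwa [Fin.succ_last] at hl
    obtain ⟨a, ha⟩ := hlast
    have hne : (B ((Fin.last m).castSucc)).Nonempty := ⟨a, hsub ha⟩
    show redStep
        (seqRed M m (fun k => B k.castSucc)
          (fun k => by
            have hk := hchain k.castSucc
            rwa [Fin.succ_castSucc] at hk))
        (B (Fin.last (m + 1))) hsub = _
    rw [ih (fun k => B k.castSucc)
      (fun k => by
        have hk := hchain k.castSucc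
        rwa [Fin.succ_castSucc] at hk) hne]
    exact SRAux.redStep_isoRed M hM _ _ hsub
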